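/- For measurable functions x, y on [0,∞) vanishing at infinity in measure, the decreasing rearrangement of the pointwise product satisfies (xy)*(t) ≤ x*(t/2) · y*(t/2) for all t > 0. -/

import Mathlib

open MeasureTheory

/-- The decreasing rearrangement of `|f|` with respect to the measure `μ`. -/
noncomputable def rearr {α : Type*} [MeasurableSpace α] (μ : Measure α)
    (f : α → ℝ) (t : ℝ) : ℝ :=
  sInf {s : ℝ | 0 ≤ s ∧ μ {u | s < |f u|} ≤ ENNReal.ofReal t}

/-- `f` vanishes at infinity in measure: every level set `{|f| > ε}` with `ε > 0`
has finite measure. -/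
def VanishesInMeasure {α : Type*} [MeasurableSpace α] (μ : Measure α) (f : α → ℝ) : Prop :=
  ∀ ε : ℝ, 0 < ε → μ {u | ε < |f u|} < ⊤

/-- A symmetric function space on a measure space: a linear subspace of the measurable
functions vanishing at infinity in measure, with a complete norm that is monotone with
respect to comparison of decreasing rearrangements. -/
structure SymmFnSpace (α : Type*) [MeasurableSpace α] (μ : Measure α) where
  carrier : Set (α → ℝ)
  N : (α → ℝ) → ℝ
  zero_mem : (0 : α → ℝ) ∈ carrier
  add_mem : ∀ {x y : α → ℝ}, x ∈ carrier → y ∈ carrier → x + y ∈ carrier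
  smul_mem : ∀ (c : ℝ) {x : α → ℝ}, x ∈ carrier → c • x ∈ carrier
  measurable_mem : ∀ {x : α → ℝ}, x ∈ carrier → Measurable x
  vanish_mem : ∀ {x : α → ℝ}, x ∈ carrier → VanishesInMeasure μ x
  norm_nonneg : ∀ x : α → ℝ, 0 ≤ N x
  norm_eq_zero : ∀ {x : α → ℝ}, x ∈ carrier → N x = 0 → x =ᵐ[μ] 0
  norm_add_le : ∀ {x y : α → ℝ}, x ∈ carrier → y ∈ carrier → N (x + y) ≤ N x + N y
  norm_smul : ∀ (c : ℝ) (x : α → ℝ), N (c • x) = |c| * N x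
  symm : ∀ {x y : α → ℝ}, Measurable x → VanishesInMeasure μ x → y ∈ carrier →
    (∀ t : ℝ, 0 < t → rearr μ x t ≤ rearr μ y t) → x ∈ carrier ∧ N x ≤ N y
  complete : ∀ f : ℕ → (α → ℝ), (∀ n, f n ∈ carrier) →
    (∀ ε : ℝ, 0 < ε → ∃ n₀, ∀ m ≥ n₀, ∀ n ≥ n₀, N (f m - f n) < ε) →
    ∃ g ∈ carrier, ∀ ε : ℝ, 0 < ε → ∃ n₀, ∀ n ≥ n₀, N (f n - g) < ε

open scoped ENNReal

/-- Lebesgue measure on the half-line `[0, ∞)`. -/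
noncomputable def mu0 : MeasureTheory.Measure ℝ := MeasureTheory.volume.restrict (Set.Ici 0)

private lemma rearr_set_nonempty {α : Type*} [MeasurableSpace α] {μ : Measure α}
    {f : α → ℝ} (hm : Measurable f) (hv : VanishesInMeasure μ f) {t : ℝ} (ht : 0 < t) :
    ∃ s : ℝ, 0 ≤ s ∧ μ {u | s < |f u|} ≤ ENNReal.ofReal t := by
  have hA : Antitone (fun n : ℕ => {u | (n : ℝ) + 1 < |f u|}) := by
    intro m n hmn u hu
    simp only [Set.mem_setOf_eq] at hu ⊢
    have : (m : ℝ) ≤ n := Nat.cast_le.2 hmn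
    linarith
  have hmeas : ∀ n : ℕ, NullMeasurableSet {u | (n : ℝ) + 1 < |f u|} μ :=
    fun n => (measurableSet_lt measurable_const hm.abs).nullMeasurableSet
  have hfin : ∃ n : ℕ, μ {u | (n : ℝ) + 1 < |f u|} ≠ ∞ := by
    refine ⟨0, ?_⟩
    have := hv 1 one_pos
    simpa using this.ne
  have hempty : (⋂ n : ℕ, {u | (n : ℝ) + 1 < |f u|}) = ∅ := by
    rw [Set.eq_empty_iff_forall_notMem]
    intro u hu
    simp only [Set.mem_iInter, Set.mem_setOf_eq] at hu
    have h1 := hu ⌈|f u|⌉₊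
    have h2 : |f u| ≤ (⌈|f u|⌉₊ : ℝ) := Nat.le_ceil _
    linarith
  have htend := tendsto_measure_iInter_atTop hmeas hA hfin
  rw [hempty, measure_empty] at htend
  have hpos : (0 : ℝ≥0∞) < ENNReal.ofReal t := ENNReal.ofReal_pos.2 ht
  obtain ⟨n, hn⟩ := (htend.eventually_lt_const hpos).exists
  exact ⟨(n : ℝ) + 1, by positivity, hn.le⟩

private lemma rearr_key {α : Type*} [MeasurableSpace α] {μ : Measure α}
    {f : α → ℝ} (hm : Measurable f) (hv : VanishesInMeasure μ f) {t : ℝ} (ht : 0 < t) :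
    0 ≤ rearr μ f t ∧ μ {u | rearr μ f t < |f u|} ≤ ENNReal.ofReal t := by
  set S := {s : ℝ | 0 ≤ s ∧ μ {u | s < |f u|} ≤ ENNReal.ofReal t} with hS
  have hne : S.Nonempty := rearr_set_nonempty hm hv ht
  have hbdd : BddBelow S := ⟨0, fun s hs => hs.1⟩
  have h0 : 0 ≤ sInf S := le_csInf hne fun s hs => hs.1
  refine ⟨h0, ?_⟩
  set a := sInf S with ha
  have key : ∀ ε : ℝ, 0 < ε → μ {u | a + ε < |f u|} ≤ ENNReal.ofReal t := by
    intro ε hε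
    obtain ⟨s, hsS, hs⟩ := Real.lt_sInf_add_pos hne hε
    refine le_trans (measure_mono ?_) hsS.2
    intro u hu
    simp only [Set.mem_setOf_eq] at hu ⊢
    linarith
  have hU : {u | a < |f u|} = ⋃ n : ℕ, {u | a + 1 / ((n : ℝ) + 1) < |f u|} := by
    ext u
    simp only [Set.mem_setOf_eq, Set.mem_iUnion]
    constructor
    · intro h
      obtain ⟨n, hn⟩ := exists_nat_one_div_lt (sub_pos.2 h)
      exact ⟨n, by linarith⟩
    · rintro ⟨n, hn⟩
      have : (0 : ℝ) < 1 / ((n : ℝ) + 1) := by positivity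
      linarith
  have hdir : Directed (· ⊆ ·) (fun n : ℕ => {u | a + 1 / ((n : ℝ) + 1) < |f u|}) := by
    apply Monotone.directed_le
    intro m n hmn u hu
    simp only [Set.mem_setOf_eq] at hu ⊢
    have h1 : (1 : ℝ) / ((n : ℝ) + 1) ≤ 1 / ((m : ℝ) + 1) := by
      apply one_div_le_one_div_of_le (by positivity)
      have : (m : ℝ) ≤ n := Nat.cast_le.2 hmn
      linarith
    linarith
  show μ {u | a < |f u|} ≤ ENNReal.ofReal t
  rw [hU, hdir.measure_iUnion]
  exact iSup_le fun n => key _ (by positivity)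

/-- For measurable functions on `[0, ∞)` vanishing at infinity in measure, the decreasing
rearrangement of a pointwise product satisfies `(xy)^*(t) ≤ x^*(t/2) y^*(t/2)`. -/
theorem rearr_mul_le {x y : ℝ → ℝ} (hxm : Measurable x) (hym : Measurable y)
    (hxv : VanishesInMeasure mu0 x) (hyv : VanishesInMeasure mu0 y) :
    ∀ t : ℝ, 0 < t → rearr mu0 (x * y) t ≤ rearr mu0 x (t / 2) * rearr mu0 y (t / 2) := by
  intro t ht
  have ht2 : 0 < t / 2 := by linarith
  obtain ⟨ha0, haμ⟩ := rearr_key hxm hxv ht2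
  obtain ⟨hb0, hbμ⟩ := rearr_key hym hyv ht2
  set a := rearr mu0 x (t / 2) with hadef
  set b := rearr mu0 y (t / 2) with hbdef
  have hsub : {u | a * b < |(x * y) u|} ⊆ {u | a < |x u|} ∪ {u | b < |y u|} := by
    intro u hu
    simp only [Set.mem_setOf_eq, Pi.mul_apply] at hu
    by_contra h
    simp only [Set.mem_union, Set.mem_setOf_eq, not_or, not_lt] at h
    have : |x u * y u| ≤ a * b := by
      rw [abs_mul]
      exact mul_le_mul h.1 h.2 (abs_nonneg _) ha0
    linarith
  have hmem : a * b ∈ {s : ℝ | 0 ≤ s ∧ mu0 {u | s < |(x * y) u|} ≤ ENNReal.ofReal t} := by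
    refine ⟨mul_nonneg ha0 hb0, ?_⟩
    calc mu0 {u | a * b < |(x * y) u|}
        ≤ mu0 ({u | a < |x u|} ∪ {u | b < |y u|}) := measure_mono hsub
      _ ≤ mu0 {u | a < |x u|} + mu0 {u | b < |y u|} := measure_union_le _ _
      _ ≤ ENNReal.ofReal (t / 2) + ENNReal.ofReal (t / 2) := add_le_add haμ hbμ
      _ = ENNReal.ofReal t := by
          rw [← ENNReal.ofReal_add (by linarith) (by linarith)]
          ring_nf
  exact csInf_le ⟨0, fun s hs => hs.1⟩ hmem
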